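/- Let λ ∈ ℂ with |λ| < 1 and let N be a natural number. Define the (2N+1) × (2N+1) complex matrix M indexed by i, j ∈ {0, 1, …, 2N} via M(i, j) = L(i − N, j − N) (so the rows and columns are labelled by the integers −N, …, N). Then the characteristic polynomial of M equals ∏_{n=0}^{N} (X − λ^n) · ∏_{n=1}^{N} (X − conj(λ)^n). In particular the eigenvalues of M, with multiplicity, are λ^0 = 1, λ, …, λ^N together with conj(λ), …, conj(λ)^N. -/

import Mathlib

/-- The matrix coefficient L(n,l) = (1/(2πi))·∮_{|z|=1} z^{l−n−1}·((1 − conj(λ)z)/(λ − z))^n dz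
of the transfer operator of the circle map τ_λ(z) = z(λ − z)/(1 − conj(λ)z). -/
noncomputable def transferCoef (lam : ℂ) (n l : ℤ) : ℂ :=
  (1 / (2 * Real.pi * Complex.I)) *
    ∮ z in C(0, 1), z ^ (l - n - 1) * ((1 - (starRingEnd ℂ) lam * z) / (lam - z)) ^ n

open Complex Metric Polynomial

open Complex Metric

open Complex Metric

lemma denom_ne {b : ℂ} (hb : ‖b‖ < 1) {z : ℂ} (hz : ‖z‖ ≤ 1) :
    1 - b * z ≠ 0 := by
  intro h
  have h1 : b * z = 1 := by linear_combination -h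
  have h2 : ‖b * z‖ = 1 := by rw [h1, norm_one]
  rw [norm_mul] at h2
  nlinarith [norm_nonneg b, norm_nonneg z]

lemma diffAt (a b : ℂ) (k m : ℕ) {z : ℂ} (hz : 1 - b * z ≠ 0) :
    DifferentiableAt ℂ (fun z : ℂ => z ^ k * ((a - z) / (1 - b * z)) ^ m) z := by
  apply DifferentiableAt.mul (differentiableAt_pow k)
  apply DifferentiableAt.pow
  exact DifferentiableAt.div ((differentiableAt_const a).sub differentiableAt_id)
    ((differentiableAt_const 1).sub ((differentiableAt_const b).mul differentiableAt_id)) hz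

lemma int_zero {b : ℂ} (hb : ‖b‖ < 1) (a : ℂ) (k m : ℕ) :
    (∮ z in C(0, 1), z ^ k * ((a - z) / (1 - b * z)) ^ m) = 0 := by
  apply circleIntegral_eq_zero_of_differentiable_on_off_countable zero_le_one Set.countable_empty
  · intro z hz
    have hz1 : ‖z‖ ≤ 1 := by simpa [Complex.dist_eq] using hz
    exact (diffAt a b k m (denom_ne hb hz1)).continuousAt.continuousWithinAt
  · intro z hz
    have hz1 : ‖z‖ ≤ 1 := by
      simpa [Complex.dist_eq] using (ball_subset_closedBall hz.1)
    exact diffAt a b k m (denom_ne hb hz1)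

lemma int_inv {b : ℂ} (hb : ‖b‖ < 1) (a : ℂ) (m : ℕ) :
    (∮ z in C(0, 1), z⁻¹ * ((a - z) / (1 - b * z)) ^ m) = (2 * Real.pi * I) * a ^ m := by
  have hd : DifferentiableOn ℂ (fun z : ℂ => ((a - z) / (1 - b * z)) ^ m) (closedBall 0 1) := by
    intro z hz
    have hz1 : ‖z‖ ≤ 1 := by simpa [Complex.dist_eq] using hz
    have := diffAt a b 0 m (denom_ne hb hz1)
    simp only [pow_zero, one_mul] at this
    exact this.differentiableWithinAt
  have := hd.circleIntegral_sub_inv_smul (w := 0) (by simp)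
  simpa [smul_eq_mul] using this

open Complex Metric

lemma circle_inv_subst (f : ℂ → ℂ) :
    (∮ z in C(0, 1), f z) = ∮ w in C(0, 1), ((w : ℂ) ^ (2 : ℕ))⁻¹ * f w⁻¹ := by
  have h1 : ∀ θ : ℝ, circleMap 0 1 (-θ) = (circleMap 0 1 θ)⁻¹ := by
    intro θ
    simp [circleMap, Complex.ofReal_neg, neg_mul, Complex.exp_neg]
  have hG : Function.Periodic
      (fun θ : ℝ => circleMap 0 1 θ * I * f (circleMap 0 1 θ)) (2 * Real.pi) := by
    intro θ
    simp [(periodic_circleMap 0 1) θ]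
  rw [circleIntegral, circleIntegral]
  simp only [deriv_circleMap, smul_eq_mul]
  have key : (fun θ : ℝ => circleMap 0 1 θ * I * (((circleMap 0 1 θ) ^ 2)⁻¹ * f (circleMap 0 1 θ)⁻¹))
      = fun θ : ℝ => circleMap 0 1 (-θ) * I * f (circleMap 0 1 (-θ)) := by
    funext θ
    rw [h1 θ]
    have hz : circleMap 0 1 θ ≠ 0 := circleMap_ne_center one_ne_zero
    field_simp
  rw [key]
  rw [intervalIntegral.integral_comp_neg (fun θ : ℝ => circleMap 0 1 θ * I * f (circleMap 0 1 θ))]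
  simpa using (hG.intervalIntegral_add_eq 0 (-(2 * Real.pi)))

lemma two_pi_I_ne : (2 * (Real.pi : ℂ) * I) ≠ 0 := by
  simp [Real.pi_ne_zero, I_ne_zero, Complex.ofReal_ne_zero]

lemma tc_neg_ne (lam : ℂ) (hlam : ‖lam‖ < 1) {n l : ℤ} (hn : n < 0) (hnl : n < l) :
    transferCoef lam n l = 0 := by
  have hc : ‖(starRingEnd ℂ) lam‖ < 1 := by rwa [Complex.norm_conj]
  rw [transferCoef]
  have h1 : ∀ z : ℂ, z ^ (l - n - 1) * ((1 - (starRingEnd ℂ) lam * z) / (lam - z)) ^ n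
      = z ^ (l - n - 1).toNat * ((lam - z) / (1 - (starRingEnd ℂ) lam * z)) ^ (-n).toNat := by
    intro z
    rw [show n = -((-n).toNat : ℤ) by omega, zpow_neg, zpow_natCast, ← inv_pow, inv_div]
    rw [show (l - -((-n).toNat : ℤ) - 1) = ((l - n - 1).toNat : ℤ) by omega, zpow_natCast]
    rw [Int.toNat_natCast, show (- -((-n).toNat : ℤ)).toNat = (-n).toNat by omega]
  simp only [h1]
  rw [int_zero hc lam _ _, mul_zero]

lemma tc_neg_diag (lam : ℂ) (hlam : ‖lam‖ < 1) {n : ℤ} (hn : n < 0) :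
    transferCoef lam n n = lam ^ (-n).toNat := by
  have hc : ‖(starRingEnd ℂ) lam‖ < 1 := by rwa [Complex.norm_conj]
  rw [transferCoef]
  have h1 : ∀ z : ℂ, z ^ (n - n - 1) * ((1 - (starRingEnd ℂ) lam * z) / (lam - z)) ^ n
      = z⁻¹ * ((lam - z) / (1 - (starRingEnd ℂ) lam * z)) ^ (-n).toNat := by
    intro z
    rw [show n - n - 1 = (-1 : ℤ) by ring, zpow_neg_one]
    rw [show n = -((-n).toNat : ℤ) by omega, zpow_neg, zpow_natCast, ← inv_pow, inv_div]
    rw [show (- -((-n).toNat : ℤ)).toNat = (-n).toNat by omega]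
  simp only [h1]
  rw [int_inv hc lam _]
  field_simp [two_pi_I_ne]

lemma tc_nonneg_aux (lam : ℂ) (hlam : ‖lam‖ < 1) {n l : ℤ} (hn : 0 ≤ n) :
    transferCoef lam n l = (1 / (2 * Real.pi * Complex.I)) *
      ∮ w in C(0, 1), w ^ (n - l - 1) *
        (((starRingEnd ℂ) lam - w) / (1 - lam * w)) ^ n.toNat := by
  rw [transferCoef,
    circle_inv_subst (fun z => z ^ (l - n - 1) * ((1 - (starRingEnd ℂ) lam * z) / (lam - z)) ^ n)]
  congr 1
  apply circleIntegral.integral_congr zero_le_one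
  intro w hw
  have hw1 : ‖w‖ = 1 := by simpa [Complex.dist_eq] using hw
  have hw0 : w ≠ 0 := by
    intro h; rw [h] at hw1; simp at hw1
  have hbase : (1 - (starRingEnd ℂ) lam * w⁻¹) / (lam - w⁻¹)
      = (((starRingEnd ℂ) lam - w) / (1 - lam * w)) := by
    by_cases h0 : 1 - lam * w = 0
    · have : lam = w⁻¹ := by field_simp; linear_combination -h0
      rw [div_eq_zero_iff.mpr (Or.inr (by rw [this]; ring)) , h0, div_zero]
    · rw [div_eq_div_iff]
      · field_simp; ring
      · intro h
        apply h0
        have : lam * w - 1 = 0 := by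
          have := congrArg (· * w) h
          simpa [sub_mul, inv_mul_cancel₀ hw0] using this
        linear_combination -this
      · exact h0
  show (w ^ (2:ℕ))⁻¹ * ((w⁻¹) ^ (l - n - 1) * ((1 - (starRingEnd ℂ) lam * w⁻¹) / (lam - w⁻¹)) ^ n) = _
  rw [hbase, inv_zpow, ← zpow_neg, show n = (n.toNat : ℤ) by omega, zpow_natCast]
  rw [show ((w:ℂ) ^ (2:ℕ))⁻¹ = w ^ (-2 : ℤ) by rw [← zpow_natCast, ← zpow_neg]; norm_num]
  rw [← mul_assoc, ← zpow_add₀ hw0]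
  congr 2
  omega

lemma tc_nonneg_ne (lam : ℂ) (hlam : ‖lam‖ < 1) {n l : ℤ} (hn : 0 ≤ n) (hnl : l < n) :
    transferCoef lam n l = 0 := by
  rw [tc_nonneg_aux lam hlam hn]
  have h1 : ∀ w : ℂ, w ^ (n - l - 1) * (((starRingEnd ℂ) lam - w) / (1 - lam * w)) ^ n.toNat
      = w ^ (n - l - 1).toNat * (((starRingEnd ℂ) lam - w) / (1 - lam * w)) ^ n.toNat := by
    intro w
    rw [show (n - l - 1 : ℤ) = ((n - l - 1).toNat : ℤ) by omega, zpow_natCast, Int.toNat_natCast]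
  simp only [h1]
  rw [int_zero hlam ((starRingEnd ℂ) lam) _ _, mul_zero]

lemma tc_nonneg_diag (lam : ℂ) (hlam : ‖lam‖ < 1) {n : ℤ} (hn : 0 ≤ n) :
    transferCoef lam n n = ((starRingEnd ℂ) lam) ^ n.toNat := by
  rw [tc_nonneg_aux lam hlam hn]
  have h1 : ∀ w : ℂ, w ^ (n - n - 1) * (((starRingEnd ℂ) lam - w) / (1 - lam * w)) ^ n.toNat
      = w⁻¹ * (((starRingEnd ℂ) lam - w) / (1 - lam * w)) ^ n.toNat := by
    intro w
    rw [show n - n - 1 = (-1 : ℤ) by ring, zpow_neg_one]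
  simp only [h1]
  rw [int_inv hlam ((starRingEnd ℂ) lam) _]
  field_simp [two_pi_I_ne]

def interleave (N : ℕ) : Fin (2 * N + 1) ≃ Fin (2 * N + 1) where
  toFun p := ⟨if p.1 % 2 = 0 then N + p.1 / 2 else N - p.1 / 2 - 1, by
    have := p.2; split_ifs <;> omega⟩
  invFun i := ⟨if N ≤ i.1 then 2 * (i.1 - N) else 2 * (N - i.1) - 1, by
    have := i.2; split_ifs <;> omega⟩
  left_inv p := by
    have := p.2; ext; dsimp only; split_ifs <;> omega
  right_inv i := by
    have := i.2; ext; dsimp only; split_ifs <;> omega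

lemma interleave_key (N : ℕ) (r : Fin (2 * N + 1)) :
    ((interleave N r : ℤ)) - N
      = if r.1 % 2 = 0 then ((r.1 / 2 : ℕ) : ℤ) else -((r.1 / 2 : ℕ) : ℤ) - 1 := by
  have := r.2
  by_cases h : r.1 % 2 = 0 <;> simp only [interleave, Equiv.coe_fn_mk, h, if_pos, if_neg,
    ite_true, ite_false] <;> omega

/-- For λ ∈ ℂ with |λ| < 1 and a natural number N, the (2N+1)×(2N+1) truncation M of the
transfer-operator matrix, with rows and columns indexed by the integers −N, …, N via
M(i,j) = L(i − N, j − N), has characteristic polynomial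
∏_{n=0}^{N} (X − λⁿ) · ∏_{n=1}^{N} (X − conj(λ)ⁿ); in particular its eigenvalues with
multiplicity are 1, λ, …, λᴺ together with conj(λ), …, conj(λ)ᴺ. -/
theorem truncation_charpoly (lam : ℂ) (hlam : ‖lam‖ < 1) (N : ℕ)
    (M : Matrix (Fin (2 * N + 1)) (Fin (2 * N + 1)) ℂ)
    (hM : ∀ i j : Fin (2 * N + 1), M i j = transferCoef lam ((i : ℤ) - N) ((j : ℤ) - N)) :
    M.charpoly =
      (∏ n ∈ Finset.range (N + 1), (Polynomial.X - Polynomial.C (lam ^ n))) *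
        ∏ n ∈ Finset.Icc 1 N, (Polynomial.X - Polynomial.C ((starRingEnd ℂ) lam ^ n)) := by
  classical
  set e := interleave N
  unfold Matrix.charpoly
  rw [← Matrix.det_submatrix_equiv_self e (Matrix.charmatrix M)]
  have htri : ((Matrix.charmatrix M).submatrix e e).BlockTriangular id := by
    intro p q h
    have hqp : q.1 < p.1 := h
    have hp2 := p.2
    have hq2 := q.2
    have hne : e p ≠ e q := e.injective.ne (Fin.ne_of_gt h)
    rw [Matrix.submatrix_apply, Matrix.charmatrix_apply_ne _ _ _ hne, hM]
    have h0 : transferCoef lam ((e p : ℤ) - N) ((e q : ℤ) - N) = 0 := by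
      rw [interleave_key, interleave_key]
      by_cases hp : p.1 % 2 = 0 <;> by_cases hq : q.1 % 2 = 0 <;>
        simp only [hp, hq, ite_true, ite_false]
      · exact tc_nonneg_ne lam hlam (by positivity) (by omega)
      · exact tc_nonneg_ne lam hlam (by positivity) (by omega)
      · exact tc_neg_ne lam hlam (by omega) (by omega)
      · exact tc_neg_ne lam hlam (by omega) (by omega)
    rw [h0, map_zero, neg_zero]
  rw [Matrix.det_of_upperTriangular htri]
  have hdval : ∀ p : Fin (2 * N + 1), ((Matrix.charmatrix M).submatrix e e) p p
      = X - C (if N ≤ (e p).1 then ((starRingEnd ℂ) lam) ^ ((e p).1 - N)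
          else lam ^ (N - (e p).1)) := by
    intro p
    rw [Matrix.submatrix_apply, Matrix.charmatrix_apply_eq, hM]
    congr 1
    by_cases h : N ≤ (e p).1
    · rw [if_pos h, tc_nonneg_diag lam hlam (by omega),
        show (((e p : ℤ)) - N).toNat = (e p).1 - N by omega]
    · rw [if_neg h, tc_neg_diag lam hlam (by omega),
        show (-(((e p : ℤ)) - N)).toNat = N - (e p).1 by omega]
  simp only [hdval]
  rw [Equiv.prod_comp e (fun i : Fin (2 * N + 1) =>
    X - C (if N ≤ i.1 then ((starRingEnd ℂ) lam) ^ (i.1 - N) else lam ^ (N - i.1)))]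
  rw [Fin.prod_univ_eq_prod_range (fun j : ℕ =>
    X - C (if N ≤ j then ((starRingEnd ℂ) lam) ^ (j - N) else lam ^ (N - j)))]
  rw [show 2 * N + 1 = N + (N + 1) by ring, Finset.prod_range_add]
  have e1 : (∏ j ∈ Finset.range N,
      (X - C (if N ≤ j then ((starRingEnd ℂ) lam) ^ (j - N) else lam ^ (N - j))))
      = ∏ j ∈ Finset.range N, (X - C (lam ^ (j + 1))) := by
    rw [← Finset.prod_range_reflect (fun j => X - C (lam ^ (j + 1))) N]
    apply Finset.prod_congr rfl
    intro j hj
    have hj' : j < N := Finset.mem_range.mp hj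
    rw [if_neg (by omega), show N - 1 - j + 1 = N - j by omega]
  have e2 : (∏ j ∈ Finset.range (N + 1),
      (X - C (if N ≤ N + j then ((starRingEnd ℂ) lam) ^ (N + j - N) else lam ^ (N - (N + j)))))
      = ∏ j ∈ Finset.range (N + 1), (X - C (((starRingEnd ℂ) lam) ^ j)) := by
    apply Finset.prod_congr rfl
    intro j _
    rw [if_pos (by omega), show N + j - N = j by omega]
  rw [e1, e2]
  have e3 : (∏ n ∈ Finset.range (N + 1), (X - C (lam ^ n)))
      = (X - C 1) * ∏ j ∈ Finset.range N, (X - C (lam ^ (j + 1))) := by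
    rw [Finset.prod_range_succ' (fun n => X - C (lam ^ n)) N, pow_zero, mul_comm]
  have e4 : (∏ n ∈ Finset.Icc 1 N, (X - C ((starRingEnd ℂ) lam ^ n)))
      = ∏ j ∈ Finset.range N, (X - C (((starRingEnd ℂ) lam) ^ (j + 1))) := by
    rw [← Finset.Ico_add_one_right_eq_Icc, Finset.prod_Ico_eq_prod_range]
    simp [add_comm]
  have e5 : (∏ j ∈ Finset.range (N + 1), (X - C (((starRingEnd ℂ) lam) ^ j)))
      = (X - C 1) * ∏ j ∈ Finset.range N, (X - C (((starRingEnd ℂ) lam) ^ (j + 1))) := by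
    rw [Finset.prod_range_succ' (fun n => X - C (((starRingEnd ℂ) lam) ^ n)) N, pow_zero, mul_comm]
  rw [e3, e4, e5]
  ring
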